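/- Let G = (V, E) be a simple graph on a finite vertex set V with nonnegative edge weights w_e ≥ 0, and let M_l and M_f be matroids on V, with P_l and P_f the convex hulls of the indicator vectors of the independent sets of M_l and M_f respectively. For a distribution π over subsets of V supported on independent sets of M_l (π(S) = 0 whenever S is not M_l-independent), with marginals q_u and pairwise marginals q_{uv}, define the follower's value Θ(π) = max over independent sets I of M_f of ∑_{e=uv∈E} [1_I(u)·w_e(1−q_u) + 1_I(v)·w_e(1−q_v) + 1_I(u)·1_I(v)·(w_e(1−q_{uv}) − w_e(1−q_u) − w_e(1−q_v))]. Suppose q' ∈ P_l satisfies sup_{x∈P_f} L̃^{q'}(x) ≤ sup_{x∈P_f} L̃^{q}(x) for every q ∈ P_l, and suppose π' is a distribution supported on independent sets of M_l whose marginal vector equals q'. Then Θ(π') ≤ (8/3)·Θ(π) for every distribution π supported on independent sets of M_l; that is, π' is an 8/3-approximation for the randomized max-vertex-cover interdiction problem min_π Θ(π). -/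
import Mathlib


open Finset

/-- The marginal probability that `u` is interdicted under distribution `π`. -/
def marg {V : Type*} [Fintype V] [DecidableEq V] (π : Finset V → ℝ) (u : V) : ℝ :=
  ∑ S ∈ univ.filter (fun S : Finset V => u ∈ S), π S

/-- The pairwise marginal probability that both `u` and `v` are interdicted under `π`. -/
def marg2 {V : Type*} [Fintype V] [DecidableEq V] (π : Finset V → ℝ) (u v : V) : ℝ :=
  ∑ S ∈ univ.filter (fun S : Finset V => u ∈ S ∧ v ∈ S), π S

/-- The indicator vector of a finite vertex set. -/
def indVec {V : Type*} [DecidableEq V] (I : Finset V) : V → ℝ :=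
  fun v => if v ∈ I then 1 else 0

/-- The matroid polytope: the convex hull of the indicator vectors of the independent sets. -/
def matroidPolytope {V : Type*} [Fintype V] [DecidableEq V] (M : Matroid V) : Set (V → ℝ) :=
  convexHull ℝ {y : V → ℝ | ∃ I : Finset V, M.Indep ↑I ∧ y = indVec I}

/-- The linearized surrogate `L̃^q(x) = ∑_{e=uv} w_e·[x_u(1 − q_u) + x_v(1 − q_v)]`. -/
def Ltilde {V : Type*} (E : Finset (V × V)) (w : V × V → ℝ)
    (q : V → ℝ) (x : V → ℝ) : ℝ :=
  ∑ e ∈ E, w e * (x e.1 * (1 - q e.1) + x e.2 * (1 - q e.2))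

/-- The follower's optimal value `Θ(π)`: the maximum, over independent sets `I` of the
follower's matroid `Mf`, of the expected total weight covered by the attacked
and unprotected vertices, against the leader's randomized strategy `π`. -/
noncomputable def Theta {V : Type*} [Fintype V] [DecidableEq V]
    (E : Finset (V × V)) (w : V × V → ℝ) (Mf : Matroid V) (π : Finset V → ℝ) : ℝ :=
  sSup {r : ℝ | ∃ I : Finset V, Mf.Indep ↑I ∧
    r = ∑ e ∈ E,
      ((if e.1 ∈ I then (1 : ℝ) else 0) * (w e * (1 - marg π e.1))
        + (if e.2 ∈ I then (1 : ℝ) else 0) * (w e * (1 - marg π e.2))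
        + (if e.1 ∈ I then (1 : ℝ) else 0) * (if e.2 ∈ I then (1 : ℝ) else 0) *
          (w e * (1 - marg2 π e.1 e.2) - w e * (1 - marg π e.1) - w e * (1 - marg π e.2)))}

section Aux
variable {V : Type*} [Fintype V] [DecidableEq V]

lemma marg_le_one (π : Finset V → ℝ) (hpos : ∀ S, 0 ≤ π S)
    (hsum : ∑ S : Finset V, π S = 1) (u : V) : marg π u ≤ 1 := by
  rw [← hsum, marg]
  exact Finset.sum_le_sum_of_subset_of_nonneg (Finset.subset_univ _)
    (fun S _ _ => hpos S)

lemma marg2_le_marg_left (π : Finset V → ℝ) (hpos : ∀ S, 0 ≤ π S) (u v : V) :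
    marg2 π u v ≤ marg π u := by
  apply Finset.sum_le_sum_of_subset_of_nonneg
  · intro S hS
    simp only [Finset.mem_filter] at *
    exact ⟨hS.1, hS.2.1⟩
  · exact fun S _ _ => hpos S

lemma marg2_le_marg_right (π : Finset V → ℝ) (hpos : ∀ S, 0 ≤ π S) (u v : V) :
    marg2 π u v ≤ marg π v := by
  apply Finset.sum_le_sum_of_subset_of_nonneg
  · intro S hS
    simp only [Finset.mem_filter] at *
    exact ⟨hS.1, hS.2.2⟩
  · exact fun S _ _ => hpos S

lemma marg2_ge (π : Finset V → ℝ) (hpos : ∀ S, 0 ≤ π S)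
    (hsum : ∑ S : Finset V, π S = 1) (u v : V) :
    marg π u + marg π v - 1 ≤ marg2 π u v := by
  have h1 : marg π u = ∑ S : Finset V, (if u ∈ S then π S else 0) := by
    rw [marg, Finset.sum_filter]
  have h2 : marg π v = ∑ S : Finset V, (if v ∈ S then π S else 0) := by
    rw [marg, Finset.sum_filter]
  have h3 : marg2 π u v = ∑ S : Finset V, (if u ∈ S ∧ v ∈ S then π S else 0) := by
    rw [marg2, Finset.sum_filter]
  have key : ∑ S : Finset V, ((if u ∈ S then π S else 0) + (if v ∈ S then π S else 0)
      - (if u ∈ S ∧ v ∈ S then π S else 0)) ≤ ∑ S : Finset V, π S := by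
    apply Finset.sum_le_sum
    intro S _
    by_cases hu : u ∈ S <;> by_cases hv : v ∈ S <;> simp [hu, hv, hpos S]
  rw [hsum] at key
  simp only [Finset.sum_sub_distrib, Finset.sum_add_distrib] at key
  rw [h1, h2, h3]; linarith

lemma ltilde_linear {V : Type*} (E : Finset (V × V)) (w : V × V → ℝ) (q : V → ℝ) :
    IsLinearMap ℝ (Ltilde E w q) := by
  constructor
  · intro x y
    simp only [Ltilde, Pi.add_apply, ← Finset.sum_add_distrib]
    exact Finset.sum_congr rfl fun e _ => by ring
  · intro c x
    simp only [Ltilde, Pi.smul_apply, smul_eq_mul, Finset.mul_sum]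
    exact Finset.sum_congr rfl fun e _ => by ring

/-- The sup of the linear functional over the matroid polytope is attained at
an independent set's indicator vector. -/
lemma sup_polytope (E : Finset (V × V)) (w : V × V → ℝ) (Mf : Matroid V) (q : V → ℝ) :
    ∃ I : Finset V, Mf.Indep ↑I ∧
      sSup (Ltilde E w q '' matroidPolytope Mf) = Ltilde E w q (indVec I) ∧
      ∀ x ∈ matroidPolytope Mf, Ltilde E w q x ≤ Ltilde E w q (indVec I) := by
  classical
  set A : Set (V → ℝ) := {y : V → ℝ | ∃ I : Finset V, Mf.Indep ↑I ∧ y = indVec I} with hA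
  set T : Finset (Finset V) := univ.filter (fun I : Finset V => Mf.Indep ↑I) with hT
  have hTne : T.Nonempty := ⟨∅, by simp [hT, Mf.empty_indep]⟩
  obtain ⟨I, hIT, hImax⟩ := Finset.exists_max_image T (fun I => Ltilde E w q (indVec I)) hTne
  have hI : Mf.Indep ↑I := by simpa [hT] using hIT
  have hIA : indVec I ∈ matroidPolytope Mf :=
    subset_convexHull ℝ A ⟨I, hI, rfl⟩
  have hub : ∀ x ∈ matroidPolytope Mf, Ltilde E w q x ≤ Ltilde E w q (indVec I) := by
    intro x hx
    have hsub : matroidPolytope Mf ⊆ {y | Ltilde E w q y ≤ Ltilde E w q (indVec I)} := by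
      apply convexHull_min _ (convex_halfSpace_le (ltilde_linear E w q) _)
      rintro y ⟨J, hJ, rfl⟩
      exact hImax J (by simp [hT, hJ])
    exact hsub hx
  refine ⟨I, hI, ?_, hub⟩
  apply le_antisymm
  · apply csSup_le ((Set.nonempty_of_mem hIA).image _)
    rintro r ⟨x, hx, rfl⟩
    exact hub x hx
  · apply le_csSup
    · exact ⟨Ltilde E w q (indVec I), by rintro r ⟨x, hx, rfl⟩; exact hub x hx⟩
    · exact ⟨indVec I, hIA, rfl⟩

lemma marg_mem_polytope (Ml : Matroid V) (π : Finset V → ℝ)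
    (hpos : ∀ S, 0 ≤ π S) (hsum : ∑ S : Finset V, π S = 1)
    (hsupp : ∀ S : Finset V, ¬ Ml.Indep ↑S → π S = 0) :
    marg π ∈ matroidPolytope Ml := by
  classical
  set t : Finset (Finset V) := univ.filter (fun S : Finset V => Ml.Indep ↑S) with ht
  have hsum' : ∑ S ∈ t, π S = 1 := by
    rw [← hsum]
    apply Finset.sum_subset (Finset.subset_univ t)
    intro S _ hS
    exact hsupp S (by simpa [ht] using hS)
  have hmem := Finset.centerMass_mem_convexHull (s := {y : V → ℝ | ∃ I : Finset V, Ml.Indep ↑I ∧ y = indVec I})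
    t (fun S _ => hpos S) (by rw [hsum']; norm_num)
    (z := fun S => indVec S) (fun S hS => ⟨S, by simpa [ht] using hS, rfl⟩)
  have hcm : t.centerMass π (fun S => indVec S) = marg π := by
    rw [Finset.centerMass, hsum']
    simp only [inv_one, one_smul]
    funext v
    calc (∑ S ∈ t, π S • indVec S) v = ∑ S ∈ t, π S * (if v ∈ S then 1 else 0) := by
          simp [Finset.sum_apply, indVec]
      _ = ∑ S : Finset V, π S * (if v ∈ S then 1 else 0) := by
          apply Finset.sum_subset (Finset.subset_univ t)
          intro S _ hS
          simp [hsupp S (by simpa [ht] using hS)]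
      _ = marg π v := by
          rw [marg, Finset.sum_filter]
          exact Finset.sum_congr rfl fun S _ => by by_cases h : v ∈ S <;> simp [h]
  rwa [hcm] at hmem

end Aux

section Theta
variable {V : Type*} [Fintype V] [DecidableEq V]

/-- The follower's value for a fixed set `I`. -/
def thetaVal (E : Finset (V × V)) (w : V × V → ℝ) (π : Finset V → ℝ)
    (I : Finset V) : ℝ :=
  ∑ e ∈ E,
      ((if e.1 ∈ I then (1 : ℝ) else 0) * (w e * (1 - marg π e.1))
        + (if e.2 ∈ I then (1 : ℝ) else 0) * (w e * (1 - marg π e.2))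
        + (if e.1 ∈ I then (1 : ℝ) else 0) * (if e.2 ∈ I then (1 : ℝ) else 0) *
          (w e * (1 - marg2 π e.1 e.2) - w e * (1 - marg π e.1) - w e * (1 - marg π e.2)))

noncomputable def Theta' (E : Finset (V × V)) (w : V × V → ℝ) (Mf : Matroid V)
    (π : Finset V → ℝ) : ℝ :=
  sSup {r : ℝ | ∃ I : Finset V, Mf.Indep ↑I ∧ r = thetaVal E w π I}

lemma theta_ge (E : Finset (V × V)) (w : V × V → ℝ) (Mf : Matroid V) (π : Finset V → ℝ)
    (I : Finset V) (hI : Mf.Indep ↑I) :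
    thetaVal E w π I ≤ Theta' E w Mf π := by
  have hset : {r : ℝ | ∃ I : Finset V, Mf.Indep ↑I ∧ r = thetaVal E w π I}
      = thetaVal E w π '' {I : Finset V | Mf.Indep ↑I} := by
    ext r; simp [Set.mem_image, eq_comm]
  apply le_csSup
  · rw [hset]
    exact ((Set.toFinite _).image _).bddAbove
  · exact ⟨I, hI, rfl⟩

lemma theta_nonneg (E : Finset (V × V)) (w : V × V → ℝ) (Mf : Matroid V)
    (π : Finset V → ℝ) : 0 ≤ Theta' E w Mf π := by
  have h0 : thetaVal E w π ∅ = 0 := by simp [thetaVal]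
  have := theta_ge E w Mf π ∅ (by simp [Mf.empty_indep])
  linarith

end Theta


/-- The `8/3`-approximation for randomized max-vertex-cover interdiction: if `q' ∈ P_l`
minimizes `sup_{x ∈ P_f} L̃^q(x)` over `q ∈ P_l`, and `π'` is a distribution supported on
the independent sets of the leader's matroid `Ml` with marginal vector `q'`, then
`Θ(π') ≤ (8/3)·Θ(π)` for every distribution `π` supported on independent sets of `Ml`. -/
theorem interdiction_approximation {V : Type*} [Fintype V] [DecidableEq V]
    (E : Finset (V × V)) (w : V × V → ℝ) (hw : ∀ e ∈ E, 0 ≤ w e)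
    (hloop : ∀ e ∈ E, e.1 ≠ e.2) (hori : ∀ e ∈ E, (e.2, e.1) ∉ E)
    (Ml Mf : Matroid V) (hMl : Ml.E = Set.univ) (hMf : Mf.E = Set.univ)
    (q' : V → ℝ) (hq'mem : q' ∈ matroidPolytope Ml)
    (hq'opt : ∀ q ∈ matroidPolytope Ml,
      sSup (Ltilde E w q' '' matroidPolytope Mf) ≤ sSup (Ltilde E w q '' matroidPolytope Mf))
    (π' : Finset V → ℝ) (hπ'pos : ∀ S : Finset V, 0 ≤ π' S)
    (hπ'sum : ∑ S : Finset V, π' S = 1)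
    (hπ'supp : ∀ S : Finset V, ¬ Ml.Indep ↑S → π' S = 0)
    (hπ'marg : ∀ v : V, marg π' v = q' v) :
    ∀ π : Finset V → ℝ, (∀ S : Finset V, 0 ≤ π S) → (∑ S : Finset V, π S = 1) →
      (∀ S : Finset V, ¬ Ml.Indep ↑S → π S = 0) →
      Theta E w Mf π' ≤ (8 / 3) * Theta E w Mf π := by
  intro π hπpos hπsum hπsupp
  have hTheta' : Theta E w Mf π' = Theta' E w Mf π' := rfl
  have hThetaπ : Theta E w Mf π = Theta' E w Mf π := rfl
  obtain ⟨I', hI', hEq', hub'⟩ := sup_polytope E w Mf q'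
  obtain ⟨J, hJ, hEqJ, hubJ⟩ := sup_polytope E w Mf (marg π)
  have hqmem : marg π ∈ matroidPolytope Ml := marg_mem_polytope Ml π hπpos hπsum hπsupp
  have step1 : Theta' E w Mf π' ≤ sSup (Ltilde E w q' '' matroidPolytope Mf) := by
    refine csSup_le ?_ ?_
    · exact ⟨thetaVal E w π' ∅, ∅, by simp [Mf.empty_indep], rfl⟩
    rintro r ⟨I, hI, rfl⟩
    have hle : thetaVal E w π' I ≤ Ltilde E w q' (indVec I) := by
      apply Finset.sum_le_sum
      intro e he
      have hq2 := marg2_ge π' hπ'pos hπ'sum e.1 e.2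
      have hwe := hw e he
      simp only [← hπ'marg, indVec]
      by_cases h1 : e.1 ∈ I <;> by_cases h2 : e.2 ∈ I <;> simp [h1, h2] <;> nlinarith
    rw [hEq']
    exact hle.trans (hub' (indVec I) (subset_convexHull ℝ _ ⟨I, hI, rfl⟩))
  have step2 := hq'opt (marg π) hqmem
  have step3 : sSup (Ltilde E w (marg π) '' matroidPolytope Mf) ≤ 2 * Theta' E w Mf π := by
    rw [hEqJ]
    have hle : Ltilde E w (marg π) (indVec J) ≤ 2 * thetaVal E w π J := by
      simp only [Ltilde, thetaVal, Finset.mul_sum]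
      apply Finset.sum_le_sum
      intro e he
      have hm1 := marg2_le_marg_left π hπpos e.1 e.2
      have hm2 := marg2_le_marg_right π hπpos e.1 e.2
      have hl1 := marg_le_one π hπpos hπsum e.1
      have hl2 := marg_le_one π hπpos hπsum e.2
      have hwe := hw e he
      simp only [indVec]
      by_cases h1 : e.1 ∈ J <;> by_cases h2 : e.2 ∈ J <;> simp [h1, h2] <;> nlinarith
    have := theta_ge E w Mf π J hJ
    linarith
  have h0 := theta_nonneg E w Mf π
  rw [hTheta', hThetaπ]
  linarith [step1.trans (step2.trans step3)]
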